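/- Let p be any probability distribution on {1,...,M_x} × {1,...,M_y} with 2 ≤ M_x ≤ M_y, let α ∈ (0,1] and γ ∈ (0, log M_x). Let ε be the unique solution in (0, 2 − 2/M_x) of (ε/2)·log[(M_x·M_y − 1)(M_x − 1)(M_y − 1)] + 3·ℋ(ε/2) = γ. If the sample size n satisfies n ≥ (2/ε²)·ln((2^{M_x·M_y} − 2)/α) — in particular if n = ⌈(2/ε²)·ln((2^{M_x·M_y} − 2)/α)⌉ — and p̂_n is the empirical distribution of an i.i.d. sample of size n from p, then Pr{ I(p̂_n) − γ ≤ I(p) ≤ I(p̂_n) + γ } ≥ 1 − α, where I denotes mutual information. -/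

import Mathlib

open scoped BigOperators
open MeasureTheory

/-- `p` is a probability distribution on the finite type `α`. -/
def IsDist {α : Type*} [Fintype α] (p : α → ℝ) : Prop :=
  (∀ a, 0 ≤ p a) ∧ ∑ a, p a = 1

/-- Shannon entropy (natural logarithm, with `0 · log 0 = 0`). -/
noncomputable def entropy {α : Type*} [Fintype α] (p : α → ℝ) : ℝ :=
  -∑ a, p a * Real.log (p a)

/-- Variational distance between two distributions on the same finite set. -/
noncomputable def Vdist {α : Type*} [Fintype α] (p q : α → ℝ) : ℝ :=
  ∑ a, |p a - q a|

/-- First marginal of a joint distribution. -/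
noncomputable def margX {Mx My : ℕ} (p : Fin Mx × Fin My → ℝ) : Fin Mx → ℝ :=
  fun i => ∑ j, p (i, j)

/-- Second marginal of a joint distribution. -/
noncomputable def margY {Mx My : ℕ} (p : Fin Mx × Fin My → ℝ) : Fin My → ℝ :=
  fun j => ∑ i, p (i, j)

/-- Mutual information of a joint distribution. -/
noncomputable def mutInfo {Mx My : ℕ} (p : Fin Mx × Fin My → ℝ) : ℝ :=
  entropy (margX p) + entropy (margY p) - entropy p

/-- Binary entropy function. -/
noncomputable def binEnt (x : ℝ) : ℝ :=
  -x * Real.log x - (1 - x) * Real.log (1 - x)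

/-- The measure on a finite type induced by a (real-valued) distribution `p`. -/
noncomputable def distMeasure {α : Type*} [Fintype α] [MeasurableSpace α]
    (p : α → ℝ) : Measure α :=
  ∑ a : α, ENNReal.ofReal (p a) • Measure.dirac a

/-- The empirical distribution of the sample `Z 0 ω, …, Z (n-1) ω`. -/
noncomputable def empDist {α : Type*} [Fintype α] [DecidableEq α] {Ω : Type*} {n : ℕ}
    (Z : Fin n → Ω → α) (ω : Ω) : α → ℝ :=
  fun a => ((Finset.univ.filter fun k => Z k ω = a).card : ℝ) / n

set_option maxHeartbeats 1000000
section Aux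
set_option linter.unusedSectionVars false



lemma hoeff_pos (m : ℝ) (h0 : 0 ≤ m) (h1 : m ≤ 1) (s : ℝ) :
    0 < 1 - m + m * Real.exp s := by
  rcases le_or_gt 1 (Real.exp s) with h | h
  · nlinarith [mul_nonneg h0 (by linarith : (0:ℝ) ≤ Real.exp s - 1)]
  · nlinarith [Real.exp_pos s, mul_le_of_le_one_left (by linarith : (0:ℝ) ≤ 1 - Real.exp s) h1]

lemma hoeff_core (m : ℝ) (h0 : 0 ≤ m) (h1 : m ≤ 1) (t : ℝ) :
    Real.log (1 - m + m * Real.exp t) ≤ t * m + t ^ 2 / 8 := by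
  set F : ℝ → ℝ := fun s => s * m + s ^ 2 / 8 - Real.log (1 - m + m * Real.exp s) with hF
  set G : ℝ → ℝ := fun s => m + s / 4 - m * Real.exp s / (1 - m + m * Real.exp s) with hG
  have hc : ∀ s : ℝ, 0 < 1 - m + m * Real.exp s := hoeff_pos m h0 h1
  have hFd : ∀ s, HasDerivAt F (G s) s := by
    intro s
    have h1' : HasDerivAt (fun s : ℝ => s * m) m s := by
      simpa using (hasDerivAt_id s).mul_const m
    have h2' : HasDerivAt (fun s : ℝ => s ^ 2 / 8) (s / 4) s := by
      have := (hasDerivAt_pow 2 s).div_const 8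
      simpa using this.congr_deriv (by ring)
    have h3' : HasDerivAt (fun s : ℝ => 1 - m + m * Real.exp s) (m * Real.exp s) s := by
      simpa using ((Real.hasDerivAt_exp s).const_mul m).const_add (1 - m)
    have h4' : HasDerivAt (fun s : ℝ => Real.log (1 - m + m * Real.exp s))
        (m * Real.exp s / (1 - m + m * Real.exp s)) s := h3'.log (hc s).ne'
    exact (h1'.add h2').sub h4'
  have hGd : ∀ s, HasDerivAt G
      ((1/4 : ℝ) - (m * Real.exp s * (1 - m + m * Real.exp s) -
        m * Real.exp s * (m * Real.exp s)) / (1 - m + m * Real.exp s) ^ 2) s := by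
    intro s
    have h3' : HasDerivAt (fun s : ℝ => 1 - m + m * Real.exp s) (m * Real.exp s) s := by
      simpa using ((Real.hasDerivAt_exp s).const_mul m).const_add (1 - m)
    have hnum : HasDerivAt (fun s : ℝ => m * Real.exp s) (m * Real.exp s) s :=
      (Real.hasDerivAt_exp s).const_mul m
    have hdiv := hnum.div h3' (hc s).ne'
    have h2' : HasDerivAt (fun s : ℝ => m + s / 4) (1/4 : ℝ) s := by
      simpa using ((hasDerivAt_id s).div_const 4).const_add m
    exact h2'.sub hdiv
  have hGmono : Monotone G := by
    apply monotone_of_deriv_nonneg (fun s => (hGd s).differentiableAt)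
    intro s
    rw [(hGd s).deriv]
    have hcs := hc s
    have he := Real.exp_pos s
    have key : (m * Real.exp s * (1 - m + m * Real.exp s) - m * Real.exp s * (m * Real.exp s))
        / (1 - m + m * Real.exp s) ^ 2 ≤ 1/4 := by
      rw [div_le_iff₀ (by positivity)]
      nlinarith [sq_nonneg (1 - m - m * Real.exp s)]
    linarith
  have hG0 : G 0 = 0 := by
    simp [hG]
  have hF0 : F 0 = 0 := by simp [hF]
  have hFnn : ∀ s, 0 ≤ F s := by
    intro s
    rcases le_or_gt 0 s with hs | hs
    · have := monotoneOn_of_deriv_nonneg (convex_Ici 0)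
        (Continuous.continuousOn (by
          have : Differentiable ℝ F := fun x => (hFd x).differentiableAt
          exact this.continuous))
        (fun x _ => (hFd x).differentiableAt.differentiableWithinAt)
        (fun x hx => by
          rw [(hFd x).deriv]
          rw [interior_Ici] at hx
          have : G 0 ≤ G x := hGmono (le_of_lt hx)
          linarith [hG0 ▸ this])
      have := this (Set.self_mem_Ici) (Set.mem_Ici.2 hs) hs
      linarith [hF0 ▸ this]
    · have := antitoneOn_of_deriv_nonpos (convex_Iic 0)
        (Continuous.continuousOn (by
          have : Differentiable ℝ F := fun x => (hFd x).differentiableAt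
          exact this.continuous))
        (fun x _ => (hFd x).differentiableAt.differentiableWithinAt)
        (fun x hx => by
          rw [(hFd x).deriv]
          rw [interior_Iic] at hx
          have : G x ≤ G 0 := hGmono (le_of_lt hx)
          linarith [hG0 ▸ this])
      have := this (Set.mem_Iic.2 hs.le) (Set.self_mem_Iic) hs.le
      linarith [hF0 ▸ this]
  have := hFnn t
  simp only [hF] at this
  linarith

lemma hoeff_mgf (m t : ℝ) (h0 : 0 ≤ m) (h1 : m ≤ 1) :
    m * Real.exp (t * (1 - m)) + (1 - m) * Real.exp (t * (0 - m)) ≤ Real.exp (t ^ 2 / 8) := by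
  have hc := hoeff_pos m h0 h1 t
  have hlog := hoeff_core m h0 h1 t
  have h2 : 1 - m + m * Real.exp t ≤ Real.exp (t * m + t ^ 2 / 8) := by
    rw [← Real.exp_log hc]
    exact Real.exp_le_exp.2 hlog
  have factor : m * Real.exp (t * (1 - m)) + (1 - m) * Real.exp (t * (0 - m))
      = Real.exp (-(t * m)) * (1 - m + m * Real.exp t) := by
    rw [show t * (1 - m) = t + -(t*m) by ring, show t * (0 - m) = -(t*m) by ring,
      Real.exp_add]
    ring
  rw [factor]
  calc Real.exp (-(t * m)) * (1 - m + m * Real.exp t)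
      ≤ Real.exp (-(t * m)) * Real.exp (t * m + t ^ 2 / 8) := by
        exact mul_le_mul_of_nonneg_left h2 (Real.exp_pos _).le
    _ = Real.exp (t ^ 2 / 8) := by rw [← Real.exp_add]; ring_nf



lemma entropy_eq {α : Type*} [Fintype α] (p : α → ℝ) :
    entropy p = ∑ a, Real.negMulLog (p a) := by
  simp [entropy, Real.negMulLog, Finset.sum_neg_distrib]

lemma binEnt_eq (x : ℝ) : binEnt x = Real.negMulLog x + Real.negMulLog (1 - x) := by
  simp [binEnt, Real.negMulLog]; ring

lemma binEnt_nonneg {x : ℝ} (h0 : 0 ≤ x) (h1 : x ≤ 1) : 0 ≤ binEnt x := by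
  rw [binEnt_eq]
  have := Real.negMulLog_nonneg h0 h1
  have := Real.negMulLog_nonneg (by linarith : (0:ℝ) ≤ 1 - x) (by linarith)
  linarith

lemma dist_le_one {α : Type*} [Fintype α] {p : α → ℝ} (hp : IsDist p) (a : α) : p a ≤ 1 := by
  rw [← hp.2]
  exact Finset.single_le_sum (fun b _ => hp.1 b) (Finset.mem_univ a)

lemma entropy_nonneg {α : Type*} [Fintype α] {p : α → ℝ} (hp : IsDist p) : 0 ≤ entropy p := by
  rw [entropy_eq]
  exact Finset.sum_nonneg fun a _ => Real.negMulLog_nonneg (hp.1 a) (dist_le_one hp a)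

lemma negMulLog_add_le {x y : ℝ} (hx : 0 ≤ x) (hy : 0 ≤ y) :
    Real.negMulLog (x + y) ≤ Real.negMulLog x + Real.negMulLog y := by
  rcases hx.eq_or_lt with h | hx'
  · simp [← h]
  rcases hy.eq_or_lt with h | hy'
  · simp [← h]
  simp only [Real.negMulLog]
  have l1 : Real.log x ≤ Real.log (x + y) := Real.log_le_log hx' (by linarith)
  have l2 : Real.log y ≤ Real.log (x + y) := Real.log_le_log hy' (by linarith)
  nlinarith

lemma entropy_mix_le {α : Type*} [Fintype α] {u v : α → ℝ} (hu : IsDist u) (hv : IsDist v)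
    {c : ℝ} (h0 : 0 ≤ c) (h1 : c ≤ 1) :
    entropy (fun a => c * u a + (1 - c) * v a)
      ≤ c * entropy u + (1 - c) * entropy v + binEnt c := by
  have key : ∀ a, Real.negMulLog (c * u a + (1 - c) * v a)
      ≤ (u a * Real.negMulLog c + c * Real.negMulLog (u a))
        + (v a * Real.negMulLog (1 - c) + (1 - c) * Real.negMulLog (v a)) := by
    intro a
    calc Real.negMulLog (c * u a + (1 - c) * v a)
        ≤ Real.negMulLog (c * u a) + Real.negMulLog ((1 - c) * v a) :=
          negMulLog_add_le (mul_nonneg h0 (hu.1 a)) (mul_nonneg (by linarith) (hv.1 a))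
      _ = _ := by rw [Real.negMulLog_mul, Real.negMulLog_mul]
  calc entropy (fun a => c * u a + (1 - c) * v a)
      = ∑ a, Real.negMulLog (c * u a + (1 - c) * v a) := entropy_eq _
    _ ≤ ∑ a, ((u a * Real.negMulLog c + c * Real.negMulLog (u a))
        + (v a * Real.negMulLog (1 - c) + (1 - c) * Real.negMulLog (v a))) :=
        Finset.sum_le_sum fun a _ => key a
    _ = c * entropy u + (1 - c) * entropy v + binEnt c := by
        rw [entropy_eq, entropy_eq, binEnt_eq]
        simp only [Finset.sum_add_distrib, ← Finset.sum_mul, ← Finset.mul_sum, hu.2, hv.2]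
        ring

lemma le_entropy_mix {α : Type*} [Fintype α] {u v : α → ℝ} (hu : IsDist u) (hv : IsDist v)
    {c : ℝ} (h0 : 0 ≤ c) (h1 : c ≤ 1) :
    c * entropy u + (1 - c) * entropy v ≤ entropy (fun a => c * u a + (1 - c) * v a) := by
  rw [entropy_eq, entropy_eq, entropy_eq, Finset.mul_sum, Finset.mul_sum,
    ← Finset.sum_add_distrib]
  refine Finset.sum_le_sum fun a _ => ?_
  have := Real.concaveOn_negMulLog.2 (Set.mem_Ici.2 (hu.1 a)) (Set.mem_Ici.2 (hv.1 a))
    h0 (by linarith : (0:ℝ) ≤ 1 - c) (by ring)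
  simpa using this

lemma entropy_le_log_card {α : Type*} [Fintype α] [DecidableEq α] {u : α → ℝ} (hu : IsDist u)
    {s : Finset α} (hs : ∀ a, a ∉ s → u a = 0) : entropy u ≤ Real.log s.card := by
  classical
  set t := s.filter (fun a => u a ≠ 0) with ht
  have hts : t ⊆ s := Finset.filter_subset _ _
  have hzero : ∀ a, a ∉ t → u a = 0 := by
    intro a ha
    by_cases h : a ∈ s
    · by_contra h'
      exact ha (Finset.mem_filter.2 ⟨h, h'⟩)
    · exact hs a h
  have hsum : ∑ a ∈ t, u a = 1 := by
    rw [← hu.2]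
    exact Finset.sum_subset (Finset.subset_univ t) (fun a _ ha => hzero a ha)
  have hpos : ∀ a ∈ t, 0 < u a := fun a ha =>
    lt_of_le_of_ne (hu.1 a) (Ne.symm (Finset.mem_filter.1 ha).2)
  have hent : entropy u = ∑ a ∈ t, u a * Real.log (u a)⁻¹ := by
    rw [entropy_eq, ← Finset.sum_subset (Finset.subset_univ t)
      (fun a _ ha => by simp [Real.negMulLog, hzero a ha])]
    refine Finset.sum_congr rfl fun a ha => ?_
    rw [Real.log_inv, Real.negMulLog]
    ring
  have hjensen := strictConcaveOn_log_Ioi.concaveOn.le_map_sum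
    (t := t) (w := u) (p := fun a => (u a)⁻¹) (fun a ha => (hpos a ha).le) hsum
    (fun a ha => Set.mem_Ioi.2 (inv_pos.2 (hpos a ha)))
  have hcard : ∑ a ∈ t, u a • (u a)⁻¹ = (t.card : ℝ) := by
    rw [Finset.card_eq_sum_ones t]
    push_cast
    refine Finset.sum_congr rfl fun a ha => ?_
    simp [mul_inv_cancel₀ (hpos a ha).ne']
  have htne : t.Nonempty := by
    by_contra h
    rw [Finset.not_nonempty_iff_eq_empty] at h
    rw [h] at hsum; simp at hsum
  calc entropy u = ∑ a ∈ t, u a • Real.log (u a)⁻¹ := by rw [hent]; simp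
    _ ≤ Real.log (∑ a ∈ t, u a • (u a)⁻¹) := hjensen
    _ = Real.log t.card := by rw [hcard]
    _ ≤ Real.log s.card := by
        apply Real.log_le_log (by exact_mod_cast Finset.card_pos.2 htne)
        exact_mod_cast Finset.card_le_card hts

section AUD
variable {α : Type*} [Fintype α] [DecidableEq α]

lemma vdist_nonneg {p q : α → ℝ} : 0 ≤ Vdist p q :=
  Finset.sum_nonneg fun a _ => abs_nonneg _

lemma vdist_comm (p q : α → ℝ) : Vdist p q = Vdist q p := by
  unfold Vdist
  exact Finset.sum_congr rfl fun a _ => abs_sub_comm _ _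

lemma entropy_sub_le {p q : α → ℝ} (hp : IsDist p) (hq : IsDist q)
    (hT1 : Vdist p q / 2 < 1) :
    entropy p - entropy q
      ≤ Vdist p q / 2 * Real.log ((Fintype.card α : ℝ) - 1) + binEnt (Vdist p q / 2) := by
  classical
  set T := Vdist p q / 2 with hTdef
  have hT0 : 0 ≤ T := by
    rw [hTdef]
    have := vdist_nonneg (p := p) (q := q)
    linarith
  rcases hT0.eq_or_lt with h0 | hTpos
  · -- T = 0 : p = q
    have hpq : p = q := by
      funext a
      have hzero : ∑ b, |p b - q b| = 0 := by
        have : Vdist p q = 0 := by rw [hTdef] at h0; linarith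
        simpa [Vdist] using this
      have := (Finset.sum_eq_zero_iff_of_nonneg (fun b _ => abs_nonneg (p b - q b))).1 hzero
        a (Finset.mem_univ a)
      have := abs_eq_zero.1 this
      linarith
    rw [hpq, ← h0]
    simp [binEnt]
  · -- 0 < T < 1
    have hsum0 : ∑ a, (p a - q a) = 0 := by
      rw [Finset.sum_sub_distrib, hp.2, hq.2]; ring
    have hmaxsum : ∑ a, max (p a - q a) 0 = T := by
      have : ∀ a, max (p a - q a) 0 = ((p a - q a) + |p a - q a|) / 2 := by
        intro a; rcases le_total (p a - q a) 0 with h | h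
        · rw [max_eq_right h, abs_of_nonpos h]; ring
        · rw [max_eq_left h, abs_of_nonneg h]; ring
      simp only [this]
      rw [← Finset.sum_div, Finset.sum_add_distrib, hsum0]
      simp [hTdef, Vdist]
    have hmaxsum' : ∑ a, max (q a - p a) 0 = T := by
      have : ∀ a, max (q a - p a) 0 = (-(p a - q a) + |p a - q a|) / 2 := by
        intro a; rcases le_total (p a - q a) 0 with h | h
        · rw [max_eq_left (by linarith), abs_of_nonpos h]; ring
        · rw [max_eq_right (by linarith), abs_of_nonneg h]; ring
      simp only [this]
      rw [← Finset.sum_div, Finset.sum_add_distrib, Finset.sum_neg_distrib, hsum0]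
      simp [hTdef, Vdist]
    set u : α → ℝ := fun a => max (p a - q a) 0 / T with hu
    set v : α → ℝ := fun a => max (q a - p a) 0 / T with hv
    set r : α → ℝ := fun a => min (p a) (q a) / (1 - T) with hr
    have hminsum : ∑ a, min (p a) (q a) = 1 - T := by
      have : ∀ a, min (p a) (q a) = p a - max (p a - q a) 0 := by
        intro a; rcases le_total (p a) (q a) with h | h
        · rw [min_eq_left h, max_eq_right (by linarith)]; ring
        · rw [min_eq_right h, max_eq_left (by linarith)]; ring
      simp only [this]
      rw [Finset.sum_sub_distrib, hp.2, hmaxsum]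
    have hud : IsDist u := by
      constructor
      · intro a; exact div_nonneg (le_max_right _ _) hTpos.le
      · simp only [hu, ← Finset.sum_div, hmaxsum]; exact div_self hTpos.ne'
    have hvd : IsDist v := by
      constructor
      · intro a; exact div_nonneg (le_max_right _ _) hTpos.le
      · simp only [hv, ← Finset.sum_div, hmaxsum']; exact div_self hTpos.ne'
    have hrd : IsDist r := by
      constructor
      · intro a; exact div_nonneg (le_min (hp.1 a) (hq.1 a)) (by linarith)
      · simp only [hr, ← Finset.sum_div, hminsum]
        exact div_self (by linarith)
    have hpdec : ∀ a, p a = T * u a + (1 - T) * r a := by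
      intro a
      rw [hu, hr]
      have h1 : T ≠ 0 := hTpos.ne'
      have h2 : (1:ℝ) - T ≠ 0 := by linarith
      field_simp
      rcases le_total (p a) (q a) with h | h
      · rw [min_eq_left h, max_eq_right (by linarith)]; ring
      · rw [min_eq_right h, max_eq_left (by linarith)]; ring
    have hqdec : ∀ a, q a = T * v a + (1 - T) * r a := by
      intro a
      rw [hv, hr]
      have h1 : T ≠ 0 := hTpos.ne'
      have h2 : (1:ℝ) - T ≠ 0 := by linarith
      field_simp
      rcases le_total (p a) (q a) with h | h
      · rw [min_eq_left h, max_eq_left (by linarith)]; ring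
      · rw [min_eq_right h, max_eq_right (by linarith)]; ring
    -- an element where q > p
    have hex : ∃ a₀, p a₀ < q a₀ := by
      by_contra h
      push_neg at h
      have : ∑ a, max (q a - p a) 0 = 0 := by
        apply Finset.sum_eq_zero
        intro a _
        rw [max_eq_right (by linarith [h a])]
      rw [hmaxsum'] at this
      linarith
    obtain ⟨a₀, ha₀⟩ := hex
    have hcard1 : 1 ≤ Fintype.card α := Fintype.card_pos_iff.2 ⟨a₀⟩
    have hHu : entropy u ≤ Real.log ((Fintype.card α : ℝ) - 1) := by
      have := entropy_le_log_card (s := Finset.univ.erase a₀) hud ?_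
      · have hc : ((Finset.univ.erase a₀).card : ℝ) = (Fintype.card α : ℝ) - 1 := by
          rw [Finset.card_erase_of_mem (Finset.mem_univ a₀), Finset.card_univ,
            Nat.cast_sub hcard1, Nat.cast_one]
        rwa [hc] at this
      · intro a ha
        have : a = a₀ := by
          by_contra h
          exact ha (Finset.mem_erase.2 ⟨h, Finset.mem_univ a⟩)
        subst this
        simp only [hu]
        rw [max_eq_right (by linarith : p a - q a ≤ 0)]
        simp
    have hup : entropy p ≤ T * entropy u + (1 - T) * entropy r + binEnt T := by
      have := entropy_mix_le hud hrd hT0 hT1.le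
      have hpe : p = fun a => T * u a + (1 - T) * r a := funext hpdec
      rw [hpe]
      exact this
    have hqlow : T * entropy v + (1 - T) * entropy r ≤ entropy q := by
      have := le_entropy_mix hvd hrd hT0 hT1.le
      have hqe : q = fun a => T * v a + (1 - T) * r a := funext hqdec
      rw [hqe]
      exact this
    have hvnn : 0 ≤ entropy v := entropy_nonneg hvd
    have hTu : T * entropy u ≤ T * Real.log ((Fintype.card α : ℝ) - 1) :=
      mul_le_mul_of_nonneg_left hHu hT0
    nlinarith [mul_nonneg hT0 hvnn]

lemma abs_entropy_sub_le {p q : α → ℝ} (hp : IsDist p) (hq : IsDist q)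
    (hT1 : Vdist p q / 2 < 1) :
    |entropy p - entropy q|
      ≤ Vdist p q / 2 * Real.log ((Fintype.card α : ℝ) - 1) + binEnt (Vdist p q / 2) := by
  rw [abs_sub_le_iff]
  constructor
  · exact entropy_sub_le hp hq hT1
  · have := entropy_sub_le hq hp (by rwa [vdist_comm])
    rwa [vdist_comm q p] at this

end AUD

lemma binEnt_hasDerivAt {x : ℝ} (h0 : 0 < x) (h1 : x < 1) :
    HasDerivAt binEnt (Real.log (1 - x) - Real.log x) x := by
  have hm : HasDerivAt (fun y : ℝ => y * Real.log y) (Real.log x + 1) x :=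
    Real.hasDerivAt_mul_log h0.ne'
  have hs : HasDerivAt (fun y : ℝ => 1 - y) (-1 : ℝ) x := by
    simpa using (hasDerivAt_id x).const_sub 1
  have hm2 : HasDerivAt (fun y : ℝ => (1 - y) * Real.log (1 - y))
      ((Real.log (1 - x) + 1) * (-1)) x :=
    (Real.hasDerivAt_mul_log (by linarith : (1:ℝ) - x ≠ 0)).comp x hs
  have : HasDerivAt (fun y : ℝ => -(y * Real.log y) - (1 - y) * Real.log (1 - y))
      (-(Real.log x + 1) - (Real.log (1 - x) + 1) * (-1)) x := hm.neg.sub hm2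
  have heq : binEnt = fun y : ℝ => -(y * Real.log y) - (1 - y) * Real.log (1 - y) := by
    funext y; unfold binEnt; ring
  rw [heq]
  convert this using 1
  ring

lemma bound_mono {M s t : ℝ} (hM : 2 ≤ M) (h0 : 0 ≤ t) (hts : t ≤ s) (hs : s < 1 - 1 / M) :
    t * Real.log (M - 1) + binEnt t ≤ s * Real.log (M - 1) + binEnt s := by
  have hMpos : (0:ℝ) < M := by linarith
  have hs1 : s < 1 := by
    have : (0:ℝ) < 1 / M := by positivity
    linarith
  have hlognn : 0 ≤ Real.log (M - 1) := Real.log_nonneg (by linarith)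
  rcases h0.eq_or_lt with h | htpos
  · -- t = 0
    rw [← h]
    have hb0 : binEnt 0 = 0 := by simp [binEnt]
    rw [hb0]
    simp only [zero_mul, add_zero, zero_add]
    have hsnn : 0 ≤ s := h0.trans hts
    have := binEnt_nonneg hsnn hs1.le
    nlinarith
  · rcases eq_or_lt_of_le hts with h | hlt
    · rw [h]
    have hcont : Continuous binEnt := by
      have : binEnt = fun x => Real.negMulLog x + Real.negMulLog (1 - x) := funext binEnt_eq
      rw [this]
      exact Real.continuous_negMulLog.add
        (Real.continuous_negMulLog.comp (continuous_const.sub continuous_id))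
    set g : ℝ → ℝ := fun x => x * Real.log (M - 1) + binEnt x with hg
    have hgc : Continuous g := (continuous_id.mul continuous_const).add hcont
    have hmono : StrictMonoOn g (Set.Icc t s) := by
      apply strictMonoOn_of_deriv_pos (convex_Icc t s) hgc.continuousOn
      intro x hx
      rw [interior_Icc] at hx
      have hx0 : 0 < x := lt_trans htpos hx.1
      have hx1 : x < 1 := lt_trans hx.2 hs1
      have hd : HasDerivAt g (Real.log (M - 1) + (Real.log (1 - x) - Real.log x)) x :=
        ((hasDerivAt_id x).mul_const (Real.log (M-1))).congr_deriv (by ring) |>.add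
          (binEnt_hasDerivAt hx0 hx1)
      rw [hd.deriv]
      have hxlt : x < 1 - 1 / M := lt_trans hx.2 hs
      have hkey : x < (M - 1) * (1 - x) := by
        have h1 : x * M < M - 1 := by
          rw [show x * M < M - 1 ↔ x < (M-1)/M from (lt_div_iff₀ hMpos).symm]
          rwa [show (M-1)/M = 1 - 1/M by field_simp]
        nlinarith
      have : Real.log x < Real.log ((M - 1) * (1 - x)) :=
        Real.log_lt_log hx0 hkey
      rw [Real.log_mul (by linarith) (by linarith)] at this
      linarith
    have := hmono (Set.mem_Icc.2 ⟨le_refl t, hts⟩) (Set.mem_Icc.2 ⟨hts, le_refl s⟩) hlt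
    exact le_of_lt this

section DET
variable {Mx My : ℕ}

lemma margX_isDist {p : Fin Mx × Fin My → ℝ} (hp : IsDist p) : IsDist (margX p) := by
  constructor
  · intro i; exact Finset.sum_nonneg fun j _ => hp.1 _
  · unfold margX
    rw [← hp.2]
    exact (Fintype.sum_prod_type (f := p)).symm

lemma margY_isDist {p : Fin Mx × Fin My → ℝ} (hp : IsDist p) : IsDist (margY p) := by
  constructor
  · intro j; exact Finset.sum_nonneg fun i _ => hp.1 _
  · unfold margY
    rw [← hp.2]
    exact (Fintype.sum_prod_type_right (f := p)).symm

lemma vdist_margX_le (p q : Fin Mx × Fin My → ℝ) : Vdist (margX p) (margX q) ≤ Vdist p q := by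
  unfold Vdist margX
  rw [Fintype.sum_prod_type]
  refine Finset.sum_le_sum fun i _ => ?_
  rw [← Finset.sum_sub_distrib]
  exact Finset.abs_sum_le_sum_abs _ _

lemma vdist_margY_le (p q : Fin Mx × Fin My → ℝ) : Vdist (margY p) (margY q) ≤ Vdist p q := by
  unfold Vdist margY
  rw [Fintype.sum_prod_type_right]
  refine Finset.sum_le_sum fun j _ => ?_
  rw [← Finset.sum_sub_distrib]
  exact Finset.abs_sum_le_sum_abs _ _

set_option maxHeartbeats 1000000 in
lemma det_bound (hMx : 2 ≤ Mx) (hMxy : Mx ≤ My)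
    {p q : Fin Mx × Fin My → ℝ} (hp : IsDist p) (hq : IsDist q)
    {ε γ : ℝ} (hεmem : ε ∈ Set.Ioo (0 : ℝ) (2 - 2 / (Mx : ℝ)))
    (hroot : ε / 2 * Real.log (((Mx : ℝ) * My - 1) * ((Mx : ℝ) - 1) * ((My : ℝ) - 1)) +
        3 * binEnt (ε / 2) = γ)
    (hV : Vdist q p ≤ ε) : |mutInfo q - mutInfo p| ≤ γ := by
  have hMx2 : (2:ℝ) ≤ (Mx:ℝ) := by exact_mod_cast hMx
  have hMy2 : (2:ℝ) ≤ (My:ℝ) := le_trans hMx2 (by exact_mod_cast hMxy)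
  have hMxy' : (Mx:ℝ) ≤ (My:ℝ) := by exact_mod_cast hMxy
  have hMxMy : (2:ℝ) ≤ (Mx:ℝ) * (My:ℝ) := by nlinarith
  have hdivx : (2:ℝ) / (Mx:ℝ) = 2 * (1 / (Mx:ℝ)) := by ring
  set s := ε / 2 with hs
  have hs0 : 0 < s := by simp [hs]; linarith [hεmem.1]
  have hsx : s < 1 - 1 / (Mx:ℝ) := by
    have := hεmem.2
    rw [hs]
    rw [hdivx] at this
    linarith
  have hsy : s < 1 - 1 / (My:ℝ) := by
    have h1 : 1 / (My:ℝ) ≤ 1 / (Mx:ℝ) := by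
      apply one_div_le_one_div_of_le
      · linarith
      · linarith
    linarith
  have hsxy : s < 1 - 1 / ((Mx:ℝ) * (My:ℝ)) := by
    have h1 : 1 / ((Mx:ℝ) * (My:ℝ)) ≤ 1 / (Mx:ℝ) := by
      apply one_div_le_one_div_of_le
      · linarith
      · nlinarith
    linarith
  have hs1 : s < 1 := by
    have : (0:ℝ) < 1 / (Mx:ℝ) := by positivity
    linarith
  -- joint bound
  have hVh : Vdist q p / 2 ≤ s := by rw [hs]; linarith
  have hVhx : Vdist (margX q) (margX p) / 2 ≤ s := by
    have := vdist_margX_le q p; rw [hs]; linarith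
  have hVhy : Vdist (margY q) (margY p) / 2 ≤ s := by
    have := vdist_margY_le q p; rw [hs]; linarith
  have hVnn := vdist_nonneg (p := q) (q := p)
  have hVnnx := vdist_nonneg (p := margX q) (q := margX p)
  have hVnny := vdist_nonneg (p := margY q) (q := margY p)
  have hcard : ((Fintype.card (Fin Mx × Fin My) : ℝ)) = (Mx:ℝ) * (My:ℝ) := by
    simp [Fintype.card_prod]
  have hb1 : |entropy q - entropy p|
      ≤ s * Real.log ((Mx:ℝ) * (My:ℝ) - 1) + binEnt s := by
    have h := abs_entropy_sub_le hq hp (by linarith)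
    rw [hcard] at h
    calc |entropy q - entropy p|
        ≤ Vdist q p / 2 * Real.log ((Mx:ℝ) * (My:ℝ) - 1) + binEnt (Vdist q p / 2) := h
      _ ≤ s * Real.log ((Mx:ℝ) * (My:ℝ) - 1) + binEnt s :=
          bound_mono hMxMy (by linarith) hVh hsxy
  have hb2 : |entropy (margX q) - entropy (margX p)|
      ≤ s * Real.log ((Mx:ℝ) - 1) + binEnt s := by
    have h := abs_entropy_sub_le (margX_isDist hq) (margX_isDist hp) (by linarith)
    rw [show ((Fintype.card (Fin Mx) : ℝ)) = (Mx:ℝ) by simp] at h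
    calc |entropy (margX q) - entropy (margX p)|
        ≤ Vdist (margX q) (margX p) / 2 * Real.log ((Mx:ℝ) - 1) +
            binEnt (Vdist (margX q) (margX p) / 2) := h
      _ ≤ s * Real.log ((Mx:ℝ) - 1) + binEnt s :=
          bound_mono hMx2 (by linarith) hVhx hsx
  have hb3 : |entropy (margY q) - entropy (margY p)|
      ≤ s * Real.log ((My:ℝ) - 1) + binEnt s := by
    have h := abs_entropy_sub_le (margY_isDist hq) (margY_isDist hp) (by linarith)
    rw [show ((Fintype.card (Fin My) : ℝ)) = (My:ℝ) by simp] at h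
    calc |entropy (margY q) - entropy (margY p)|
        ≤ Vdist (margY q) (margY p) / 2 * Real.log ((My:ℝ) - 1) +
            binEnt (Vdist (margY q) (margY p) / 2) := h
      _ ≤ s * Real.log ((My:ℝ) - 1) + binEnt s :=
          bound_mono hMy2 (by linarith) hVhy hsy
  have hlogsplit : Real.log (((Mx : ℝ) * My - 1) * ((Mx : ℝ) - 1) * ((My : ℝ) - 1))
      = Real.log ((Mx:ℝ) * (My:ℝ) - 1) + Real.log ((Mx:ℝ) - 1) + Real.log ((My:ℝ) - 1) := by
    rw [Real.log_mul (by nlinarith) (by nlinarith), Real.log_mul (by nlinarith) (by nlinarith)]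
  have htri : |mutInfo q - mutInfo p|
      ≤ |entropy (margX q) - entropy (margX p)| + |entropy (margY q) - entropy (margY p)|
        + |entropy q - entropy p| := by
    unfold mutInfo
    have := abs_add_le (entropy (margX q) - entropy (margX p))
      (entropy (margY q) - entropy (margY p))
    have h2 := abs_add_le ((entropy (margX q) - entropy (margX p)) +
      (entropy (margY q) - entropy (margY p))) (-(entropy q - entropy p))
    rw [abs_neg] at h2
    calc |entropy (margX q) + entropy (margY q) - entropy q -
          (entropy (margX p) + entropy (margY p) - entropy p)|
        = |((entropy (margX q) - entropy (margX p)) + (entropy (margY q) - entropy (margY p)))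
            + -(entropy q - entropy p)| := by ring_nf
      _ ≤ _ := by linarith
  rw [← hroot, hlogsplit]
  calc |mutInfo q - mutInfo p|
      ≤ _ := htri
    _ ≤ (s * Real.log ((Mx:ℝ) - 1) + binEnt s) + (s * Real.log ((My:ℝ) - 1) + binEnt s)
        + (s * Real.log ((Mx:ℝ) * (My:ℝ) - 1) + binEnt s) := by linarith
    _ = ε / 2 * (Real.log ((Mx:ℝ) * (My:ℝ) - 1) + Real.log ((Mx:ℝ) - 1)
        + Real.log ((My:ℝ) - 1)) + 3 * binEnt (ε / 2) := by rw [← hs]; ring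

end DET

section PROB
open ProbabilityTheory

variable {τ : Type*} [Fintype τ] [DecidableEq τ] [MeasurableSpace τ] [MeasurableSingletonClass τ]

lemma distMeasure_singleton (p : τ → ℝ) (hp : ∀ a, 0 ≤ p a) (a : τ) :
    distMeasure p {a} = ENNReal.ofReal (p a) := by
  classical
  unfold distMeasure
  rw [Measure.finset_sum_apply]
  rw [Finset.sum_eq_single a]
  · simp
  · intro b _ hb
    simp [Measure.dirac_apply' _ (MeasurableSet.singleton a), Set.indicator_apply, hb]
  · simp

lemma distMeasure_isProb {p : τ → ℝ} (hp : IsDist p) :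
    IsProbabilityMeasure (distMeasure p) := by
  constructor
  unfold distMeasure
  rw [Measure.finset_sum_apply]
  simp only [Measure.smul_apply, measure_univ, smul_eq_mul, mul_one]
  rw [← ENNReal.ofReal_sum_of_nonneg (fun a _ => hp.1 a), hp.2, ENNReal.ofReal_one]

lemma integral_distMeasure {p : τ → ℝ} (hp : IsDist p) (f : τ → ℝ) :
    ∫ a, f a ∂(distMeasure p) = ∑ a, p a * f a := by
  haveI := distMeasure_isProb hp
  rw [MeasureTheory.integral_fintype (MeasureTheory.Integrable.of_finite)]
  refine Finset.sum_congr rfl fun a _ => ?_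
  rw [measureReal_def, distMeasure_singleton p hp.1 a, ENNReal.toReal_ofReal (hp.1 a), smul_eq_mul]

lemma hoeffding_event {Ω : Type*} [MeasurableSpace Ω] (μ : MeasureTheory.Measure Ω)
    [MeasureTheory.IsProbabilityMeasure μ] {n : ℕ}
    (Z : Fin n → Ω → τ) (hmeas : ∀ k, Measurable (Z k))
    (hindep : iIndepFun Z μ)
    {p : τ → ℝ} (hp : IsDist p) (hdist : ∀ k, MeasureTheory.Measure.map (Z k) μ = distMeasure p)
    (A : Finset τ) {ε : ℝ} (hε : 0 < ε) :
    μ {ω | (n : ℝ) * (ε / 2) ≤ ∑ k, ((if Z k ω ∈ A then (1:ℝ) else 0) - ∑ b ∈ A, p b)}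
      ≤ ENNReal.ofReal (Real.exp (-(n : ℝ) * ε ^ 2 / 2)) := by
  classical
  set m : ℝ := ∑ b ∈ A, p b with hm
  have hm0 : 0 ≤ m := Finset.sum_nonneg fun b _ => hp.1 b
  have hm1 : m ≤ 1 := by
    rw [hm, ← hp.2]
    exact Finset.sum_le_sum_of_subset_of_nonneg (Finset.subset_univ A) fun b _ _ => hp.1 b
  set g : τ → ℝ := fun a => (if a ∈ A then (1:ℝ) else 0) - m with hg
  set Y : Fin n → Ω → ℝ := fun k => g ∘ Z k with hY
  have hgb : ∀ a, |g a| ≤ 1 := by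
    intro a
    rw [hg]
    by_cases h : a ∈ A
    · simp only [if_pos h]
      rw [abs_le]; constructor <;> linarith
    · simp only [if_neg h]
      rw [abs_le]; constructor <;> linarith
  have hYmeas : ∀ k, Measurable (Y k) := fun k => (measurable_of_finite g).comp (hmeas k)
  have hYindep : iIndepFun Y μ :=
    hindep.comp (fun _ => g) (fun _ => measurable_of_finite g)
  have hint : ∀ (t : ℝ) (k : Fin n),
      MeasureTheory.Integrable (fun ω => Real.exp (t * Y k ω)) μ := by
    intro t k
    refine MeasureTheory.Integrable.mono' (MeasureTheory.integrable_const (Real.exp |t|))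
      (((hYmeas k).const_mul t).exp.aestronglyMeasurable) ?_
    refine Filter.Eventually.of_forall fun ω => ?_
    rw [Real.norm_eq_abs, Real.abs_exp]
    apply Real.exp_le_exp.2
    calc t * Y k ω ≤ |t * Y k ω| := le_abs_self _
      _ = |t| * |Y k ω| := abs_mul _ _
      _ ≤ |t| * 1 := mul_le_mul_of_nonneg_left (hgb (Z k ω)) (abs_nonneg t)
      _ = |t| := mul_one _
  have hmgf : ∀ (t : ℝ) (k : Fin n), mgf (Y k) μ t ≤ Real.exp (t ^ 2 / 8) := by
    intro t k
    have hmap : mgf (Y k) μ t = ∑ a, p a * Real.exp (t * g a) := by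
      have h1 : ∫ a, Real.exp (t * g a) ∂(MeasureTheory.Measure.map (Z k) μ)
          = ∫ ω, Real.exp (t * Y k ω) ∂μ :=
        MeasureTheory.integral_map (hmeas k).aemeasurable
          (Measurable.aestronglyMeasurable (measurable_of_finite _))
      unfold mgf
      rw [← h1, hdist k, integral_distMeasure hp]
    rw [hmap]
    have hsplit : ∑ a, p a * Real.exp (t * g a)
        = m * Real.exp (t * (1 - m)) + (1 - m) * Real.exp (t * (0 - m)) := by
      rw [← Finset.sum_add_sum_compl A]
      have h1 : ∑ a ∈ A, p a * Real.exp (t * g a) = m * Real.exp (t * (1 - m)) := by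
        rw [Finset.sum_congr rfl (fun a ha => ?_), ← Finset.sum_mul]
        rw [hg]; simp [ha]
      have h2 : ∑ a ∈ Aᶜ, p a * Real.exp (t * g a) = (1 - m) * Real.exp (t * (0 - m)) := by
        have hAc : ∑ a ∈ Aᶜ, p a = 1 - m := by
          have := Finset.sum_add_sum_compl A p
          rw [hp.2] at this
          linarith [this]
        rw [Finset.sum_congr rfl (fun a ha => ?_), ← Finset.sum_mul, hAc]
        rw [hg]
        simp only [Finset.mem_compl] at ha
        simp [ha]
      rw [h1, h2]
    rw [hsplit]
    exact hoeff_mgf m t hm0 hm1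
  -- Chernoff bound with t = 2ε
  set t : ℝ := 2 * ε with ht
  have ht0 : 0 ≤ t := by rw [ht]; linarith
  have hintsum : MeasureTheory.Integrable
      (fun ω => Real.exp (t * (∑ k, Y k) ω)) μ :=
    hYindep.integrable_exp_mul_sum hYmeas (fun k _ => hint t k)
  have hch := measure_ge_le_exp_mul_mgf (X := ∑ k, Y k) (μ := μ) ((n : ℝ) * (ε / 2)) ht0 hintsum
  have hmgfsum : mgf (∑ k, Y k) μ t ≤ Real.exp ((n : ℝ) * t ^ 2 / 8) := by
    rw [hYindep.mgf_sum hYmeas]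
    calc ∏ k : Fin n, mgf (Y k) μ t ≤ ∏ _k : Fin n, Real.exp (t ^ 2 / 8) :=
          Finset.prod_le_prod (fun k _ => mgf_nonneg) (fun k _ => hmgf t k)
      _ = Real.exp (t ^ 2 / 8) ^ n := by rw [Finset.prod_const, Finset.card_univ, Fintype.card_fin]
      _ = Real.exp ((n : ℝ) * t ^ 2 / 8) := by
          rw [← Real.exp_nat_mul]; ring_nf
  have hset : {ω | (n : ℝ) * (ε / 2) ≤ ∑ k, ((if Z k ω ∈ A then (1:ℝ) else 0) - m)}
      = {ω | (n : ℝ) * (ε / 2) ≤ (∑ k, Y k) ω} := by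
    ext ω
    simp only [Set.mem_setOf_eq, Finset.sum_apply]
    rfl
  rw [hset]
  have hfinal : Real.exp (-t * ((n : ℝ) * (ε / 2))) * Real.exp ((n : ℝ) * t ^ 2 / 8)
      = Real.exp (-(n : ℝ) * ε ^ 2 / 2) := by
    rw [← Real.exp_add]
    congr 1
    rw [ht]; ring
  have hb : (μ {ω | (n : ℝ) * (ε / 2) ≤ (∑ k, Y k) ω}).toReal
      ≤ Real.exp (-(n : ℝ) * ε ^ 2 / 2) := by
    calc (μ {ω | (n : ℝ) * (ε / 2) ≤ (∑ k, Y k) ω}).toReal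
        ≤ Real.exp (-t * ((n : ℝ) * (ε / 2))) * mgf (∑ k, Y k) μ t := hch
      _ ≤ Real.exp (-t * ((n : ℝ) * (ε / 2))) * Real.exp ((n : ℝ) * t ^ 2 / 8) :=
          mul_le_mul_of_nonneg_left hmgfsum (Real.exp_pos _).le
      _ = _ := hfinal
  rw [← ENNReal.ofReal_toReal (MeasureTheory.measure_ne_top μ _)]
  exact ENNReal.ofReal_le_ofReal hb

end PROB

section EMP
variable {τ : Type*} [Fintype τ] [DecidableEq τ] {Ω : Type*} {n : ℕ}

lemma empDist_isDist (Z : Fin n → Ω → τ) (ω : Ω) (hn : 0 < n) : IsDist (empDist Z ω) := by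
  constructor
  · intro a; exact div_nonneg (by positivity) (by positivity)
  · unfold empDist
    rw [← Finset.sum_div]
    rw [← Nat.cast_sum]
    rw [← Finset.card_eq_sum_card_fiberwise (f := fun k => Z k ω)
      (t := Finset.univ) (fun k _ => Finset.mem_univ _)]
    rw [Finset.card_univ, Fintype.card_fin]
    field_simp

lemma empDist_sum_finset (Z : Fin n → Ω → τ) (ω : Ω) (A : Finset τ) :
    ∑ a ∈ A, empDist Z ω a
      = ((Finset.univ.filter fun k => Z k ω ∈ A).card : ℝ) / n := by
  unfold empDist
  rw [← Finset.sum_div, ← Nat.cast_sum]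
  congr 2
  rw [Finset.card_eq_sum_card_fiberwise (f := fun k => Z k ω) (t := A)
    (s := Finset.univ.filter fun k => Z k ω ∈ A)
    (fun k hk => (Finset.mem_filter.1 hk).2)]
  refine Finset.sum_congr rfl fun a ha => ?_
  congr 1
  ext k
  simp only [Finset.mem_filter, Finset.mem_univ, true_and]
  constructor
  · intro h; exact ⟨by rw [h]; exact ha, h⟩
  · rintro ⟨_, h⟩; exact h

end EMP

end Aux

/-- Theorem 3: sample-size bound. If `ε` is the unique root in
`(0, 2 - 2/Mx)` of `(ε/2)·log[(Mx·My-1)(Mx-1)(My-1)] + 3·ℋ(ε/2) = γ` and the sample size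
satisfies `n ≥ (2/ε²)·ln((2^(Mx·My)-2)/α)`, then `[I(p̂_n) - γ, I(p̂_n) + γ]` contains
`I(p)` with probability at least `1 - α`. -/
theorem mutInfo_confidence_sample_size {Mx My : ℕ} (hMx : 2 ≤ Mx) (hMxy : Mx ≤ My)
    (p : Fin Mx × Fin My → ℝ) (hp : IsDist p)
    (α : ℝ) (hα : α ∈ Set.Ioc (0 : ℝ) 1)
    (γ : ℝ) (hγ : γ ∈ Set.Ioo 0 (Real.log (Mx : ℝ)))
    (ε : ℝ) (hεmem : ε ∈ Set.Ioo (0 : ℝ) (2 - 2 / (Mx : ℝ)))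
    (hroot : ε / 2 * Real.log (((Mx : ℝ) * My - 1) * ((Mx : ℝ) - 1) * ((My : ℝ) - 1)) +
        3 * binEnt (ε / 2) = γ)
    {Ω : Type*} [MeasurableSpace Ω] (μ : Measure Ω) [IsProbabilityMeasure μ]
    {n : ℕ} (hn : (n : ℝ) ≥ 2 / ε ^ 2 * Real.log (((2 : ℝ) ^ (Mx * My) - 2) / α))
    (Z : Fin n → Ω → Fin Mx × Fin My)
    (hmeas : ∀ k, Measurable (Z k))
    (hindep : ProbabilityTheory.iIndepFun Z μ)
    (hdist : ∀ k, Measure.map (Z k) μ = distMeasure p) :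
    (μ {ω | mutInfo (empDist Z ω) - γ ≤ mutInfo p ∧
            mutInfo p ≤ mutInfo (empDist Z ω) + γ}).toReal ≥ 1 - α := by
  classical
  obtain ⟨hα0, hα1⟩ := hα
  have hε0 : (0:ℝ) < ε := hεmem.1
  have hMxMy4 : 4 ≤ Mx * My := le_trans (by norm_num) (Nat.mul_le_mul hMx (hMx.trans hMxy))
  have h2M : (16:ℝ) ≤ (2:ℝ) ^ (Mx * My) := by
    calc (16:ℝ) = 2 ^ 4 := by norm_num
      _ ≤ 2 ^ (Mx * My) := pow_le_pow_right₀ (by norm_num) hMxMy4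
  have hPow2 : (0:ℝ) < (2:ℝ) ^ (Mx * My) - 2 := by linarith
  have hfrac1 : (1:ℝ) < ((2:ℝ) ^ (Mx * My) - 2) / α := by
    rw [lt_div_iff₀ hα0]; nlinarith
  have hlogpos : 0 < Real.log (((2:ℝ) ^ (Mx * My) - 2) / α) := Real.log_pos hfrac1
  have hnpos : 0 < n := by
    rcases Nat.eq_zero_or_pos n with h0 | h
    · exfalso
      rw [h0] at hn
      have hpos : 0 < 2 / ε ^ 2 * Real.log (((2:ℝ) ^ (Mx * My) - 2) / α) :=
        mul_pos (by positivity) hlogpos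
      simp only [Nat.cast_zero] at hn
      linarith
    · exact h
  have hnR : (0:ℝ) < (n:ℝ) := by exact_mod_cast hnpos
  have hemp : ∀ ω, IsDist (empDist Z ω) := fun ω => empDist_isDist Z ω hnpos
  set G : Set Ω := {ω | mutInfo (empDist Z ω) - γ ≤ mutInfo p ∧
      mutInfo p ≤ mutInfo (empDist Z ω) + γ} with hG
  set B : Set Ω := {ω | ε < Vdist (empDist Z ω) p} with hBdef
  have hsub : Bᶜ ⊆ G := by
    intro ω hω
    simp only [hBdef, Set.mem_compl_iff, Set.mem_setOf_eq, not_lt] at hω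
    have habs := det_bound hMx hMxy hp (hemp ω) hεmem hroot hω
    rw [abs_le] at habs
    exact ⟨by linarith [habs.2], by linarith [habs.1]⟩
  set E : Finset (Fin Mx × Fin My) → Set Ω := fun A =>
    {ω | (n : ℝ) * (ε / 2) ≤ ∑ k, ((if Z k ω ∈ A then (1:ℝ) else 0) - ∑ b ∈ A, p b)} with hE
  set S : Finset (Finset (Fin Mx × Fin My)) := Finset.univ \ {∅, Finset.univ} with hS
  have hBsub : B ⊆ ⋃ A ∈ S, E A := by
    intro ω hω
    rw [hBdef, Set.mem_setOf_eq] at hω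
    set qd : Fin Mx × Fin My → ℝ := empDist Z ω with hqd
    set A : Finset (Fin Mx × Fin My) := Finset.univ.filter (fun a => p a < qd a) with hA
    have hsum0 : ∑ a, (qd a - p a) = 0 := by
      rw [Finset.sum_sub_distrib, (hemp ω).2, hp.2]; ring
    have hmaxeq : ∑ a ∈ A, (qd a - p a) = ∑ a, max (qd a - p a) 0 := by
      calc ∑ a ∈ A, (qd a - p a) = ∑ a ∈ A, max (qd a - p a) 0 :=
            Finset.sum_congr rfl fun a ha => by
              rw [max_eq_left]
              linarith [(Finset.mem_filter.1 ha).2]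
        _ = ∑ a, max (qd a - p a) 0 :=
            Finset.sum_subset (Finset.subset_univ A) fun a _ ha => by
              have h1 : ¬ p a < qd a := fun hc => ha (Finset.mem_filter.2 ⟨Finset.mem_univ a, hc⟩)
              rw [max_eq_right]
              linarith [not_lt.1 h1]
    have hmaxabs : ∑ a, max (qd a - p a) 0 = Vdist qd p / 2 := by
      have h1 : ∀ a, max (qd a - p a) 0 = ((qd a - p a) + |qd a - p a|) / 2 := by
        intro a; rcases le_total (qd a - p a) 0 with h | h
        · rw [max_eq_right h, abs_of_nonpos h]; ring
        · rw [max_eq_left h, abs_of_nonneg h]; ring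
      simp only [h1]
      rw [← Finset.sum_div, Finset.sum_add_distrib, hsum0]
      unfold Vdist
      ring
    have hhalf : ε / 2 < ∑ a ∈ A, (qd a - p a) := by
      rw [hmaxeq, hmaxabs]; linarith
    have hAS : A ∈ S := by
      rw [hS, Finset.mem_sdiff]
      refine ⟨Finset.mem_univ A, ?_⟩
      intro hmem
      rcases Finset.mem_insert.1 hmem with h | h
      · rw [h] at hhalf
        simp only [Finset.sum_empty] at hhalf
        linarith
      · rw [Finset.mem_singleton.1 h] at hhalf
        rw [hsum0] at hhalf
        linarith
    refine Set.mem_biUnion hAS ?_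
    rw [hE]
    show (n : ℝ) * (ε / 2) ≤ ∑ k, ((if Z k ω ∈ A then (1:ℝ) else 0) - ∑ b ∈ A, p b)
    have hcount : ∑ k : Fin n, (if Z k ω ∈ A then (1:ℝ) else 0)
        = ((Finset.univ.filter fun k => Z k ω ∈ A).card : ℝ) := by
      rw [Finset.sum_boole]
    have hsumq : ∑ a ∈ A, qd a = ((Finset.univ.filter fun k => Z k ω ∈ A).card : ℝ) / n :=
      empDist_sum_finset Z ω A
    have hsplit : ∑ k : Fin n, ((if Z k ω ∈ A then (1:ℝ) else 0) - ∑ b ∈ A, p b)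
        = ((Finset.univ.filter fun k => Z k ω ∈ A).card : ℝ) - (n:ℝ) * ∑ b ∈ A, p b := by
      rw [Finset.sum_sub_distrib, hcount, Finset.sum_const, Finset.card_univ, Fintype.card_fin,
        nsmul_eq_mul]
    rw [hsplit]
    have hcount' : ((Finset.univ.filter fun k => Z k ω ∈ A).card : ℝ) = (n:ℝ) * ∑ a ∈ A, qd a := by
      rw [hsumq]; field_simp
    rw [hcount']
    have : (n:ℝ) * ∑ a ∈ A, qd a - (n:ℝ) * ∑ b ∈ A, p b = (n:ℝ) * ∑ a ∈ A, (qd a - p a) := by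
      rw [Finset.sum_sub_distrib]; ring
    rw [this]
    exact mul_le_mul_of_nonneg_left hhalf.le hnR.le
  have hEbound : ∀ A, μ (E A) ≤ ENNReal.ofReal (Real.exp (-(n:ℝ) * ε ^ 2 / 2)) :=
    fun A => hoeffding_event μ Z hmeas hindep hp hdist A hε0
  haveI : Nonempty (Fin Mx × Fin My) :=
    ⟨(⟨0, by omega⟩, ⟨0, by omega⟩)⟩
  have hne : (∅ : Finset (Fin Mx × Fin My)) ≠ Finset.univ :=
    Ne.symm (Finset.univ_nonempty.ne_empty)
  have hcardS : S.card = 2 ^ (Mx * My) - 2 := by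
    rw [hS, Finset.card_sdiff_of_subset (fun x _ => Finset.mem_univ x)]
    rw [Finset.card_univ, Fintype.card_finset, Fintype.card_prod, Fintype.card_fin,
      Fintype.card_fin, Finset.card_pair hne]
  have h22 : 2 ≤ 2 ^ (Mx * My) := by
    calc 2 = 2 ^ 1 := by norm_num
      _ ≤ 2 ^ (Mx * My) := Nat.pow_le_pow_right (by norm_num) (by omega)
  have hcastS : ((S.card : ℕ) : ℝ) = (2:ℝ) ^ (Mx * My) - 2 := by
    rw [hcardS]
    push_cast [Nat.cast_sub h22]
    norm_num
  have hexp : Real.exp (-(n:ℝ) * ε ^ 2 / 2) ≤ α / ((2:ℝ) ^ (Mx * My) - 2) := by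
    have h2ε : (0:ℝ) < ε ^ 2 := by positivity
    have hiden : 2 / ε ^ 2 * Real.log (((2:ℝ) ^ (Mx * My) - 2) / α) * (ε ^ 2 / 2)
        = Real.log (((2:ℝ) ^ (Mx * My) - 2) / α) := by
      field_simp
    have hmul := mul_le_mul_of_nonneg_right hn (by positivity : (0:ℝ) ≤ ε ^ 2 / 2)
    rw [hiden] at hmul
    have hL : Real.log (((2:ℝ) ^ (Mx * My) - 2) / α) ≤ (n:ℝ) * ε ^ 2 / 2 := by
      calc Real.log (((2:ℝ) ^ (Mx * My) - 2) / α) ≤ (n:ℝ) * (ε ^ 2 / 2) := hmul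
        _ = (n:ℝ) * ε ^ 2 / 2 := by ring
    calc Real.exp (-(n:ℝ) * ε ^ 2 / 2)
        ≤ Real.exp (-Real.log (((2:ℝ) ^ (Mx * My) - 2) / α)) := by
          apply Real.exp_le_exp.2
          linarith
      _ = α / ((2:ℝ) ^ (Mx * My) - 2) := by
          rw [Real.exp_neg, Real.exp_log (div_pos hPow2 hα0), inv_div]
  have hreal : ((S.card : ℕ) : ℝ) * Real.exp (-(n:ℝ) * ε ^ 2 / 2) ≤ α := by
    rw [hcastS]
    calc ((2:ℝ) ^ (Mx * My) - 2) * Real.exp (-(n:ℝ) * ε ^ 2 / 2)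
        ≤ ((2:ℝ) ^ (Mx * My) - 2) * (α / ((2:ℝ) ^ (Mx * My) - 2)) :=
          mul_le_mul_of_nonneg_left hexp hPow2.le
      _ = α := by field_simp
  have hunion : μ B ≤ ENNReal.ofReal α := by
    calc μ B ≤ μ (⋃ A ∈ S, E A) := MeasureTheory.measure_mono hBsub
      _ ≤ ∑ A ∈ S, μ (E A) := MeasureTheory.measure_biUnion_finset_le S E
      _ ≤ ∑ _A ∈ S, ENNReal.ofReal (Real.exp (-(n:ℝ) * ε ^ 2 / 2)) :=
          Finset.sum_le_sum fun A _ => hEbound A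
      _ = S.card • ENNReal.ofReal (Real.exp (-(n:ℝ) * ε ^ 2 / 2)) := Finset.sum_const _
      _ = ENNReal.ofReal ((S.card : ℝ)) * ENNReal.ofReal (Real.exp (-(n:ℝ) * ε ^ 2 / 2)) := by
          rw [nsmul_eq_mul, ENNReal.ofReal_natCast]
      _ = ENNReal.ofReal ((S.card : ℝ) * Real.exp (-(n:ℝ) * ε ^ 2 / 2)) := by
          rw [ENNReal.ofReal_mul (by positivity)]
      _ ≤ ENNReal.ofReal α := ENNReal.ofReal_le_ofReal hreal
  have h1le : (1:ENNReal) ≤ μ B + μ Bᶜ := by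
    have := MeasureTheory.measure_union_le (μ := μ) B Bᶜ
    rw [Set.union_compl_self, MeasureTheory.measure_univ] at this
    exact this
  have hBc : 1 - ENNReal.ofReal α ≤ μ Bᶜ := by
    rw [tsub_le_iff_right]
    calc (1:ENNReal) ≤ μ B + μ Bᶜ := h1le
      _ ≤ ENNReal.ofReal α + μ Bᶜ := add_le_add_left hunion _
      _ = μ Bᶜ + ENNReal.ofReal α := add_comm _ _
  have hGbound : 1 - ENNReal.ofReal α ≤ μ G :=
    le_trans hBc (MeasureTheory.measure_mono hsub)
  have htoReal := ENNReal.toReal_mono (MeasureTheory.measure_ne_top μ G) hGbound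
  have heq : ((1 : ENNReal) - ENNReal.ofReal α).toReal = 1 - α := by
    rw [show (1:ENNReal) = ENNReal.ofReal 1 by simp, ← ENNReal.ofReal_sub 1 hα0.le,
      ENNReal.toReal_ofReal (by linarith)]
  rw [heq] at htoReal
  exact htoReal
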